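/- Let G be an r-regular graph on n vertices with edge set E and Laplacian second eigenvalue λ₂ > 0. Let X¹,...,Xⁿ ∈ ℝᵈ with mean μ and potential Γ = ∑ᵢ‖Xⁱ−μ‖². If an edge (i,j) is chosen uniformly at random from the rn/2 edges and the update Yⁱ = Yʲ = (Xⁱ+Xʲ)/2, Yᵏ = Xᵏ for k≠i,j is applied, then the expected new potential satisfies E[∑ₖ‖Yᵏ − μ‖²] ≤ (1 − λ₂/(rn)) Γ. -/

import Mathlib

open Finset

/-- Expected potential decrease for a uniformly random pairwise averaging step on an
r-regular graph: E[Γ'] ≤ (1 − λ₂/(rn)) Γ. -/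
theorem expected_potential_decrease (n d r : ℕ) (hn : 0 < n) (hr : 0 < r)
    (G : SimpleGraph (Fin n)) [DecidableRel G.Adj]
    (hreg : G.IsRegularOfDegree r)
    (lam2 : ℝ) (hlam2pos : 0 < lam2)
    (X : Fin n → EuclideanSpace ℝ (Fin d))
    (μ : EuclideanSpace ℝ (Fin d)) (hμ : μ = (n : ℝ)⁻¹ • ∑ k, X k)
    (Γ : ℝ) (hΓ : Γ = ∑ k, ‖X k - μ‖ ^ 2)
    (hlam : lam2 * Γ ≤
      (1 / 2) * ∑ i, ∑ j, if G.Adj i j then ‖X i - X j‖ ^ 2 else 0)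
    (Y : Fin n → Fin n → Fin n → EuclideanSpace ℝ (Fin d))
    (hY : ∀ i j k, Y i j k =
      if k = i ∨ k = j then (2 : ℝ)⁻¹ • (X i + X j) else X k) :
    ((r : ℝ) * n / 2)⁻¹ *
        ((1 / 2) * ∑ i, ∑ j, if G.Adj i j then (∑ k, ‖Y i j k - μ‖ ^ 2) else 0) ≤
      (1 - lam2 / ((r : ℝ) * n)) * Γ := by
  -- key identity: averaging an edge decreases the potential by ‖X i - X j‖²/2
  have key : ∀ i j : Fin n, G.Adj i j →
      (∑ k, ‖Y i j k - μ‖ ^ 2) = Γ - ‖X i - X j‖ ^ 2 / 2 := by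
    intro i j hadj
    have hij : i ≠ j := G.ne_of_adj hadj
    have hsum : ∑ k, (‖Y i j k - μ‖ ^ 2 - ‖X k - μ‖ ^ 2)
        = (‖Y i j i - μ‖ ^ 2 - ‖X i - μ‖ ^ 2) + (‖Y i j j - μ‖ ^ 2 - ‖X j - μ‖ ^ 2) := by
      have hsub : ∑ k, (‖Y i j k - μ‖ ^ 2 - ‖X k - μ‖ ^ 2)
          = ∑ k ∈ ({i, j} : Finset (Fin n)), (‖Y i j k - μ‖ ^ 2 - ‖X k - μ‖ ^ 2) := by
        refine (Finset.sum_subset (Finset.subset_univ _) ?_).symm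
        intro k _ hk
        simp only [Finset.mem_insert, Finset.mem_singleton, not_or] at hk
        rw [hY]
        simp [hk.1, hk.2]
      rw [hsub, Finset.sum_pair hij]
    have hYi : Y i j i = (2:ℝ)⁻¹ • (X i + X j) := by rw [hY]; simp
    have hYj : Y i j j = (2:ℝ)⁻¹ • (X i + X j) := by rw [hY]; simp
    have hmid : ‖(2:ℝ)⁻¹ • (X i + X j) - μ‖ ^ 2
        = ((‖X i - μ‖ ^ 2 + ‖X j - μ‖ ^ 2) - ‖X i - X j‖ ^ 2 / 2) / 2 := by
      have h1 : (2:ℝ)⁻¹ • (X i + X j) - μ = (2:ℝ)⁻¹ • ((X i - μ) + (X j - μ)) := by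
        module
      rw [h1, norm_smul]
      have hpar := parallelogram_law_with_norm ℝ (X i - μ) (X j - μ)
      have hd : X i - μ - (X j - μ) = X i - X j := by abel
      rw [hd] at hpar
      have h2 : ‖((2:ℝ)⁻¹)‖ = (2:ℝ)⁻¹ := by norm_num
      rw [h2]
      nlinarith [hpar, norm_nonneg (X i - μ + (X j - μ))]
    rw [hYi, hYj, hmid] at hsum
    have hΓ' : ∑ k, ‖Y i j k - μ‖ ^ 2 - Γ
        = ∑ k, (‖Y i j k - μ‖ ^ 2 - ‖X k - μ‖ ^ 2) := by
      rw [hΓ, Finset.sum_sub_distrib]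
    rw [hsum] at hΓ'
    linarith
  -- rewrite the double sum
  have hdeg : ∀ i : Fin n, ∑ j, (if G.Adj i j then Γ else 0) = (r : ℝ) * Γ := by
    intro i
    rw [← Finset.sum_filter, Finset.sum_const, ← SimpleGraph.neighborFinset_eq_filter]
    rw [show (G.neighborFinset i).card = r from hreg i]
    simp [mul_comm]
  have hrw : (1 / 2 : ℝ) * ∑ i, ∑ j, (if G.Adj i j then (∑ k, ‖Y i j k - μ‖ ^ 2) else 0)
      = (r : ℝ) * n / 2 * Γ
        - (1 / 2) * ((1 / 2) * ∑ i, ∑ j, (if G.Adj i j then ‖X i - X j‖ ^ 2 else 0)) := by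
    have h1 : ∀ i : Fin n, ∑ j, (if G.Adj i j then (∑ k, ‖Y i j k - μ‖ ^ 2) else 0)
        = (r : ℝ) * Γ - (1 / 2) * ∑ j, (if G.Adj i j then ‖X i - X j‖ ^ 2 else 0) := by
      intro i
      have : ∀ j, (if G.Adj i j then (∑ k, ‖Y i j k - μ‖ ^ 2) else 0)
          = (if G.Adj i j then Γ else 0) - (1 / 2) * (if G.Adj i j then ‖X i - X j‖ ^ 2 else 0) := by
        intro j
        by_cases h : G.Adj i j
        · simp only [h, if_true]
          rw [key i j h]; ring
        · simp [h]
      rw [Finset.sum_congr rfl (fun j _ => this j), Finset.sum_sub_distrib, hdeg i,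
        ← Finset.mul_sum]
    rw [Finset.sum_congr rfl (fun i _ => h1 i), Finset.sum_sub_distrib, Finset.sum_const,
      ← Finset.mul_sum]
    simp only [Finset.card_univ, Fintype.card_fin, nsmul_eq_mul]
    ring
  rw [hrw]
  set S := (1 / 2 : ℝ) * ∑ i, ∑ j, (if G.Adj i j then ‖X i - X j‖ ^ 2 else 0) with hS
  have hrn : (0 : ℝ) < (r : ℝ) * n := by positivity
  rw [inv_mul_le_iff₀ (by positivity)]
  have hl2 : (r : ℝ) * n / 2 * ((1 - lam2 / ((r : ℝ) * n)) * Γ)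
      = (r : ℝ) * n / 2 * Γ - lam2 * Γ / 2 := by
    field_simp
  rw [hl2]
  linarith
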